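/- Equip ℝ⁴ with the norm ‖(x,y,w,z)‖ := max(√(x² + y²) + |w|, |x| + √(w² + z²)) (whose dual unit ball is the convex hull of the four circles S₁^± = {(x,y,±1,0) : x²+y²=1} and S₂^± = {(±1,0,w,z) : w²+z²=1}). Then the function g : ℝ⁴ → ℝ, g(x,y,w,z) = max(x − w, x + w, x + z), is a horofunction of (ℝ⁴, ‖·‖) but is not a Busemann point. -/

import Mathlib

open Filter Topology Set

noncomputable section

/-- `φ_z` for the norm `N`: `φ_z(x) = N(z − x) − N(z)`. -/
def phiN {V : Type*} [AddCommGroup V] (N : V → ℝ) (z : V) : V → ℝ :=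
  fun x => N (z - x) - N z

/-- A horofunction for the norm `N`: a limit, uniformly on compact sets, of
functions `φ_{z_n}`, which is not itself of the form `φ_z`. -/
def IsHorofunctionN {V : Type*} [AddCommGroup V] [TopologicalSpace V]
    (N : V → ℝ) (h : V → ℝ) : Prop :=
  (∃ z : ℕ → V, ∀ K : Set V, IsCompact K →
      TendstoUniformlyOn (fun n x => phiN N (z n) x) h atTop K) ∧
  ∀ z : V, h ≠ phiN N z

/-- An almost-geodesic for the norm `N`. -/
def IsAlmostGeodesicN {V : Type*} [AddCommGroup V] (N : V → ℝ)
    (T : Set ℝ) (γ : ℝ → V) : Prop :=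
  T ⊆ Set.Ici (0 : ℝ) ∧ (0 : ℝ) ∈ T ∧ ¬ BddAbove T ∧
  ∀ ε > (0 : ℝ), ∃ M : ℝ, ∀ s ∈ T, ∀ t ∈ T, M ≤ s → s ≤ t →
    |N (γ t - γ s) + N (γ s - γ 0) - t| < ε

/-- A Busemann point for the norm `N`: a horofunction which is the limit, uniformly
on compact sets, of `φ_{γ(t)}` along an almost-geodesic `γ`. -/
def IsBusemannPointN {V : Type*} [AddCommGroup V] [TopologicalSpace V]
    (N : V → ℝ) (h : V → ℝ) : Prop :=
  IsHorofunctionN N h ∧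
  ∃ (T : Set ℝ) (γ : ℝ → V), IsAlmostGeodesicN N T γ ∧
    ∀ K : Set V, IsCompact K → ∀ ε > (0 : ℝ), ∃ M : ℝ, ∀ t ∈ T, M ≤ t →
      ∀ x ∈ K, |phiN N (γ t) x - h x| < ε

/-- The norm `‖(x,y,w,z)‖ = max(√(x² + y²) + |w|, |x| + √(w² + z²))` on `ℝ⁴`. -/
def N4 (p : ℝ × ℝ × ℝ × ℝ) : ℝ :=
  max (Real.sqrt (p.1 ^ 2 + p.2.1 ^ 2) + |p.2.2.1|)
    (|p.1| + Real.sqrt (p.2.2.1 ^ 2 + p.2.2.2 ^ 2))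

/-- `g(x,y,w,z) = max(x − w, x + w, x + z)`. -/
def g4 (p : ℝ × ℝ × ℝ × ℝ) : ℝ :=
  max (p.1 - p.2.2.1) (max (p.1 + p.2.2.1) (p.1 + p.2.2.2))

-- Cauchy-Schwarz in 2D
lemma cs2 (a b c d : ℝ) : (a*c + b*d)^2 ≤ (a^2+b^2)*(c^2+d^2) := by
  nlinarith [sq_nonneg (a*d - b*c)]

-- lower linearization of euclidean norm
lemma sqrt_lin_lower (v₁ v₂ w₁ w₂ V : ℝ) (hV : 0 < V) (hV2 : V^2 = v₁^2 + v₂^2) :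
    V + (v₁*w₁ + v₂*w₂)/V ≤ Real.sqrt ((v₁+w₁)^2 + (v₂+w₂)^2) := by
  set p := (v₁*w₁ + v₂*w₂) with hp
  rcases le_or_gt (V + p/V) 0 with h | h
  · exact h.trans (Real.sqrt_nonneg _)
  · rw [Real.le_sqrt h.le (by positivity)]
    have hcs := cs2 v₁ v₂ w₁ w₂
    have hVne : V ≠ 0 := hV.ne'
    have key : (V + p/V)^2 = V^2 + 2*p + p^2/V^2 := by field_simp; ring
    rw [key]
    have : p^2/V^2 ≤ w₁^2 + w₂^2 := by
      rw [div_le_iff₀ (by positivity)]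
      calc p^2 ≤ (v₁^2+v₂^2)*(w₁^2+w₂^2) := hcs
        _ = (w₁^2+w₂^2) * V^2 := by rw [hV2]; ring
    nlinarith

-- upper linearization
lemma sqrt_lin_upper (v₁ v₂ w₁ w₂ V : ℝ) (hV : 0 < V) (hV2 : V^2 = v₁^2 + v₂^2)
    (hw : w₁^2 + w₂^2 ≤ V^2) :
    Real.sqrt ((v₁+w₁)^2 + (v₂+w₂)^2) ≤ V + (v₁*w₁ + v₂*w₂)/V + (w₁^2+w₂^2)/(2*V) := by
  set p := (v₁*w₁ + v₂*w₂) with hp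
  have hcs := cs2 v₁ v₂ w₁ w₂
  have hVne : V ≠ 0 := hV.ne'
  have hpV : -V ≤ p/V := by
    rw [neg_le, ← neg_div, div_le_iff₀ hV]
    nlinarith [sq_nonneg (p + V^2)]
  have hR : 0 ≤ V + p/V + (w₁^2+w₂^2)/(2*V) := by
    have : 0 ≤ (w₁^2+w₂^2)/(2*V) := by positivity
    linarith
  have hsq : (v₁+w₁)^2 + (v₂+w₂)^2 ≤ (V + p/V + (w₁^2+w₂^2)/(2*V))^2 := by
    have expand : (V + p/V + (w₁^2+w₂^2)/(2*V))^2
        = V^2 + 2*p + (w₁^2+w₂^2) + (p/V + (w₁^2+w₂^2)/(2*V))^2 := by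
      field_simp; ring
    nlinarith [sq_nonneg (p/V + (w₁^2+w₂^2)/(2*V)), hV2]
  calc Real.sqrt ((v₁+w₁)^2 + (v₂+w₂)^2) ≤ Real.sqrt ((V + p/V + (w₁^2+w₂^2)/(2*V))^2) :=
        Real.sqrt_le_sqrt hsq
    _ = _ := Real.sqrt_sq hR

-- triangle inequality for 2D euclidean
lemma sqrt_add_sq_le (a b c d : ℝ) :
    Real.sqrt ((a+c)^2 + (b+d)^2) ≤ Real.sqrt (a^2+b^2) + Real.sqrt (c^2+d^2) := by
  have h1 : 0 ≤ Real.sqrt (a^2+b^2) := Real.sqrt_nonneg _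
  have h2 : 0 ≤ Real.sqrt (c^2+d^2) := Real.sqrt_nonneg _
  have e1 : Real.sqrt (a^2+b^2)^2 = a^2+b^2 := Real.sq_sqrt (by positivity)
  have e2 : Real.sqrt (c^2+d^2)^2 = c^2+d^2 := Real.sq_sqrt (by positivity)
  have hcd : a*c+b*d ≤ Real.sqrt (a^2+b^2) * Real.sqrt (c^2+d^2) := by
    rcases le_or_gt (a*c+b*d) 0 with h | h
    · exact h.trans (by positivity)
    · have := cs2 a b c d
      nlinarith [mul_nonneg h1 h2]
  have hsq : (a+c)^2 + (b+d)^2 ≤ (Real.sqrt (a^2+b^2) + Real.sqrt (c^2+d^2))^2 := by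
    nlinarith
  calc Real.sqrt ((a+c)^2 + (b+d)^2)
      ≤ Real.sqrt ((Real.sqrt (a^2+b^2) + Real.sqrt (c^2+d^2))^2) := Real.sqrt_le_sqrt hsq
    _ = _ := Real.sqrt_sq (by positivity)

lemma abs_le_sqrt2 (c d : ℝ) : |d| ≤ Real.sqrt (c^2 + d^2) := by
  rw [← Real.sqrt_sq_eq_abs]
  exact Real.sqrt_le_sqrt (by nlinarith [sq_nonneg c])

lemma N4_zero : N4 0 = 0 := by
  simp [N4]

lemma N4_nonneg (p : ℝ × ℝ × ℝ × ℝ) : 0 ≤ N4 p := by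
  refine le_trans ?_ (le_max_left _ _)
  positivity

lemma N4_neg (p : ℝ × ℝ × ℝ × ℝ) : N4 (-p) = N4 p := by
  simp [N4, neg_sq]

lemma N4_triangle (p q : ℝ × ℝ × ℝ × ℝ) : N4 (p + q) ≤ N4 p + N4 q := by
  have h1 : Real.sqrt ((p+q).1^2 + (p+q).2.1^2) + |(p+q).2.2.1| ≤ N4 p + N4 q := by
    have := sqrt_add_sq_le p.1 p.2.1 q.1 q.2.1
    have habs := abs_add_le p.2.2.1 q.2.2.1
    have hp : Real.sqrt (p.1^2+p.2.1^2) + |p.2.2.1| ≤ N4 p := le_max_left _ _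
    have hq : Real.sqrt (q.1^2+q.2.1^2) + |q.2.2.1| ≤ N4 q := le_max_left _ _
    simp only [Prod.fst_add, Prod.snd_add]
    linarith
  have h2 : |(p+q).1| + Real.sqrt ((p+q).2.2.1^2 + (p+q).2.2.2^2) ≤ N4 p + N4 q := by
    have := sqrt_add_sq_le p.2.2.1 p.2.2.2 q.2.2.1 q.2.2.2
    have habs := abs_add_le p.1 q.1
    have hp : |p.1| + Real.sqrt (p.2.2.1^2+p.2.2.2^2) ≤ N4 p := le_max_right _ _
    have hq : |q.1| + Real.sqrt (q.2.2.1^2+q.2.2.2^2) ≤ N4 q := le_max_right _ _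
    simp only [Prod.fst_add, Prod.snd_add]
    linarith
  exact max_le h1 h2

lemma N4_sub_le (p q : ℝ × ℝ × ℝ × ℝ) : N4 (p - q) ≤ N4 p + N4 q := by
  rw [sub_eq_add_neg]
  exact (N4_triangle p (-q)).trans (by rw [N4_neg])

lemma N4_lower2 (p : ℝ × ℝ × ℝ × ℝ) :
    |p.1| + Real.sqrt (p.2.2.1^2 + p.2.2.2^2) ≤ N4 p := le_max_right _ _

lemma g4_eq (p : ℝ × ℝ × ℝ × ℝ) : g4 p = max (p.1 + |p.2.2.1|) (p.1 + p.2.2.2) := by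
  unfold g4
  rw [← max_assoc]
  congr 1
  rw [sub_eq_add_neg, max_add_add_left, abs_eq_max_neg, max_comm p.2.2.1 (-p.2.2.1)]

lemma g4_ge_fst (p : ℝ × ℝ × ℝ × ℝ) : p.1 ≤ g4 p := by
  rw [g4_eq]
  exact le_trans (le_add_of_nonneg_right (abs_nonneg _)) (le_max_left _ _)

/-- The approximating sequence. -/
def zseq (n : ℕ) : ℝ × ℝ × ℝ × ℝ :=
  (-(n : ℝ), Real.sqrt (2*(n:ℝ)*Real.sqrt (n:ℝ) + (n:ℝ)), 0, -Real.sqrt (n:ℝ))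

lemma le_of_sq_le_sq'' {x y : ℝ} (hx : 0 ≤ x) (hy : 0 ≤ y) (h : x^2 ≤ y^2) : x ≤ y := by
  nlinarith

set_option maxHeartbeats 2000000 in
lemma zseq_conv : ∀ K : Set (ℝ × ℝ × ℝ × ℝ), IsCompact K →
    TendstoUniformlyOn (fun n x => phiN N4 (zseq n) x) g4 atTop K := by
  intro K hK
  rw [Metric.tendstoUniformlyOn_iff]
  intro ε hε
  obtain ⟨r, hr⟩ := hK.isBounded.subset_closedBall 0
  set R : ℝ := max r 1 with hRdef
  have hR1 : (1:ℝ) ≤ R := le_max_right _ _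
  have hR0 : (0:ℝ) ≤ R := by linarith
  have hxb : ∀ x ∈ K, |x.1| ≤ R ∧ |x.2.1| ≤ R ∧ |x.2.2.1| ≤ R ∧ |x.2.2.2| ≤ R := by
    intro x hx
    have h0 := hr hx
    rw [Metric.mem_closedBall] at h0
    have hrR : r ≤ R := le_max_left _ _
    have hxn : ‖x‖ ≤ r := by rw [← dist_zero_right]; exact h0
    have k1 : ‖x.1‖ ≤ ‖x‖ := norm_fst_le x
    have k2 : ‖x.2‖ ≤ ‖x‖ := norm_snd_le x
    have k3 : ‖x.2.1‖ ≤ ‖x.2‖ := norm_fst_le x.2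
    have k4 : ‖x.2.2‖ ≤ ‖x.2‖ := norm_snd_le x.2
    have k5 : ‖x.2.2.1‖ ≤ ‖x.2.2‖ := norm_fst_le x.2.2
    have k6 : ‖x.2.2.2‖ ≤ ‖x.2.2‖ := norm_snd_le x.2.2
    rw [Real.norm_eq_abs] at k1 k3 k5 k6
    exact ⟨by linarith, by linarith, by linarith, by linarith⟩
  set Cr : ℝ := 3*R + R^2 with hCrdef
  have hCr0 : 0 ≤ Cr := by positivity
  clear_value Cr
  have hev : ∀ᶠ (n:ℕ) in atTop,
      max (2*R^2 + 2*R + 2) ((Cr/ε + 1)^4) ≤ (n:ℝ) :=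
    tendsto_natCast_atTop_atTop.eventually_ge_atTop _
  filter_upwards [hev] with n hn x hx
  obtain ⟨hx1, hx2, hx3, hx4⟩ := hxb x hx
  set nn : ℝ := (n:ℝ) with hnndef
  have hnnA : 2*R^2 + 2*R + 2 ≤ nn := le_trans (le_max_left _ _) hn
  have hnnB : (Cr/ε + 1)^4 ≤ nn := le_trans (le_max_right _ _) hn
  have hnn1 : (1:ℝ) ≤ nn := by nlinarith only [hnnA, hR1]
  have hnn0 : (0:ℝ) ≤ nn := by linarith
  set rt : ℝ := Real.sqrt nn with hrtdef
  have hrt0 : 0 ≤ rt := Real.sqrt_nonneg _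
  have hrtsq : rt^2 = nn := Real.sq_sqrt hnn0
  have hrt1 : (1:ℝ) ≤ rt := by nlinarith only [hrtsq, hnn1, hrt0]
  have hrtp : (0:ℝ) < rt := by linarith
  have hrtnn : rt ≤ nn := by nlinarith only [hrtsq, hrt1]
  set qt : ℝ := Real.sqrt rt with hqtdef
  have hqt0 : 0 ≤ qt := Real.sqrt_nonneg _
  have hqtsq : qt^2 = rt := Real.sq_sqrt hrt0
  have hqt1 : (1:ℝ) ≤ qt := by nlinarith only [hqtsq, hrt1, hqt0]
  have hqtp : 0 < qt := by linarith
  have hqtrt : qt ≤ rt := by nlinarith only [hqtsq, hqt1]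
  set b : ℝ := Real.sqrt (2*nn*rt + nn) with hbdef
  have hb0 : 0 ≤ b := Real.sqrt_nonneg _
  have hbsq : b^2 = 2*nn*rt + nn := Real.sq_sqrt (by positivity)
  set V : ℝ := nn + rt with hVdef
  have hV : 0 < V := by linarith
  have hVsq : V^2 = nn^2 + b^2 := by rw [hbsq, hVdef, ← hrtsq]; ring
  have hqtV : qt ≤ V := by linarith
  -- value of the norm at zseq n
  have hz1 : (zseq n).1 = -nn := rfl
  have hz2 : (zseq n).2.1 = b := rfl
  have hz3 : (zseq n).2.2.1 = 0 := rfl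
  have hz4 : (zseq n).2.2.2 = -rt := rfl
  have hNz : N4 (zseq n) = V := by
    unfold N4
    rw [hz1, hz2, hz3, hz4]
    have e1 : Real.sqrt ((-nn)^2 + b^2) = V := by
      rw [show (-nn)^2 + b^2 = V^2 by rw [hVsq]; ring, Real.sqrt_sq hV.le]
    have e2 : Real.sqrt ((0:ℝ)^2 + (-rt)^2) = rt := by
      rw [show (0:ℝ)^2 + (-rt)^2 = rt^2 by ring, Real.sqrt_sq hrt0]
    rw [e1, e2, abs_neg, abs_of_nonneg hnn0, abs_zero, add_zero]
    rw [← hVdef, max_self]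
  -- components of zseq n - x
  have c1 : (zseq n - x).1 = -(nn + x.1) := by
    simp only [Prod.fst_sub, hz1]; ring
  have c2 : (zseq n - x).2.1 = b - x.2.1 := by
    simp only [Prod.snd_sub, Prod.fst_sub]
    rw [show (zseq n).2.1 = b from rfl]
  have c3 : (zseq n - x).2.2.1 = -x.2.2.1 := by
    simp only [Prod.snd_sub, Prod.fst_sub]
    rw [show (zseq n).2.2.1 = 0 from rfl]; ring
  have c4 : (zseq n - x).2.2.2 = -(rt + x.2.2.2) := by
    simp only [Prod.snd_sub]
    rw [show (zseq n).2.2.2 = -rt from rfl]; ring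
  have hnnx1 : 0 ≤ nn + x.1 := by
    have h := abs_le.mp hx1
    nlinarith only [h.1, hnnA, hR1]
  set SA : ℝ := Real.sqrt ((nn + x.1)^2 + (b - x.2.1)^2) with hSAdef
  set SB : ℝ := Real.sqrt (x.2.2.1^2 + (rt + x.2.2.2)^2) with hSBdef
  have hNzx : N4 (zseq n - x) = max (SA + |x.2.2.1|) ((nn + x.1) + SB) := by
    unfold N4
    rw [c1, c2, c3, c4, neg_sq, abs_neg, abs_neg, abs_of_nonneg hnnx1]
    rw [show (-(rt + x.2.2.2))^2 = (rt + x.2.2.2)^2 by ring]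
    rw [show (-x.2.2.1)^2 = x.2.2.1^2 by ring]
  -- branch A estimate
  have hA_low := sqrt_lin_lower nn b x.1 (-x.2.1) V hV hVsq
  have hwA : x.1^2 + (-x.2.1)^2 ≤ V^2 := by
    have e1 := abs_le.mp hx1
    have e2 := abs_le.mp hx2
    have q1 : x.1^2 ≤ R^2 := sq_le_sq' e1.1 e1.2
    have q2 : x.2.1^2 ≤ R^2 := sq_le_sq' e2.1 e2.2
    have h3 : nn ≤ V := by rw [hVdef]; linarith
    have h4 : nn^2 ≤ V^2 := by nlinarith only [h3, hnn0]
    have h5 : nn ≤ nn^2 := by nlinarith only [hnn1]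
    nlinarith only [q1, q2, h4, h5, hnnA, hR0]
  have hA_up := sqrt_lin_upper nn b x.1 (-x.2.1) V hV hVsq hwA
  rw [show (b + -x.2.1)^2 = (b - x.2.1)^2 by ring, ← hSAdef] at hA_low hA_up
  have hrtqtV : rt * qt ≤ V := by nlinarith only [hqtrt, hrt0, hrtsq, hVdef, hrt1]
  have hbqtV : b * qt ≤ 2 * V := by
    refine le_of_sq_le_sq'' (by positivity) (by positivity) ?_
    rw [mul_pow, mul_pow, hbsq, hqtsq, hVsq, hbsq]
    have h1 : nn*rt^2 = nn*nn := by rw [hrtsq]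
    nlinarith only [h1, hnn0, hrt0, mul_nonneg hnn0 hrt0]
  have hnum : |(-(rt*x.1) - b*x.2.1)| ≤ rt*R + b*R := by
    calc |(-(rt*x.1) - b*x.2.1)| ≤ |(-(rt*x.1))| + |b*x.2.1| := abs_sub _ _
      _ = rt*|x.1| + b*|x.2.1| := by
          rw [abs_neg, abs_mul, abs_mul, abs_of_nonneg hrt0, abs_of_nonneg hb0]
      _ ≤ rt*R + b*R := by
          have e1 := mul_le_mul_of_nonneg_left hx1 hrt0
          have e2 := mul_le_mul_of_nonneg_left hx2 hb0
          linarith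
  have hfrac : (rt*R + b*R)/V ≤ 3*R/qt := by
    rw [div_le_div_iff₀ hV hqtp]
    nlinarith only [mul_le_mul_of_nonneg_right hrtqtV hR0, mul_le_mul_of_nonneg_right hbqtV hR0]
  have hterm1 : |(nn*x.1 + b*(-x.2.1))/V - x.1| ≤ 3*R/qt := by
    have e : (nn*x.1 + b*(-x.2.1))/V - x.1 = (-(rt*x.1) - b*x.2.1)/V := by
      field_simp
      rw [hVdef]; ring
    rw [e, abs_div, abs_of_pos hV]
    calc |(-(rt*x.1) - b*x.2.1)|/V ≤ (rt*R + b*R)/V := by gcongr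
      _ ≤ 3*R/qt := hfrac
  have ht1 := abs_le.mp hterm1
  have hup2 : (x.1^2 + (-x.2.1)^2)/(2*V) ≤ R^2/qt := by
    rw [div_le_div_iff₀ (by linarith) hqtp]
    have e1 := abs_le.mp hx1
    have e2 := abs_le.mp hx2
    have q1 : x.1^2 ≤ R^2 := sq_le_sq' e1.1 e1.2
    have q2 : x.2.1^2 ≤ R^2 := sq_le_sq' e2.1 e2.2
    nlinarith only [q1, q2, hqt0, mul_le_mul_of_nonneg_left hqtV (by positivity : (0:ℝ) ≤ 2*R^2)]
  have hCrsplit : Cr/qt = 3*R/qt + R^2/qt := by rw [hCrdef, add_div]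
  have hAest : |SA - V - x.1| ≤ Cr/qt := by
    rw [abs_le]
    constructor
    · have : 0 ≤ R^2/qt := by positivity
      rw [hCrsplit]; linarith
    · rw [hCrsplit]; linarith
  -- branch B estimate
  have hB_low := sqrt_lin_lower 0 rt x.2.2.1 x.2.2.2 rt hrtp (by ring)
  have hwB : x.2.2.1^2 + x.2.2.2^2 ≤ rt^2 := by
    rw [hrtsq]
    have e3 := abs_le.mp hx3
    have e4 := abs_le.mp hx4
    have q3 : x.2.2.1^2 ≤ R^2 := sq_le_sq' e3.1 e3.2
    have q4 : x.2.2.2^2 ≤ R^2 := sq_le_sq' e4.1 e4.2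
    nlinarith only [q3, q4, hnnA, hR1, hR0]
  have hB_up := sqrt_lin_upper 0 rt x.2.2.1 x.2.2.2 rt hrtp (by ring) hwB
  rw [show ((0:ℝ) + x.2.2.1)^2 = x.2.2.1^2 by ring] at hB_low hB_up
  rw [show (0*x.2.2.1 + rt*x.2.2.2)/rt = x.2.2.2 by field_simp; ring] at hB_low hB_up
  rw [← hSBdef] at hB_low hB_up
  have hupB : (x.2.2.1^2 + x.2.2.2^2)/(2*rt) ≤ R^2/qt := by
    rw [div_le_div_iff₀ (by linarith) hqtp]
    have e3 := abs_le.mp hx3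
    have e4 := abs_le.mp hx4
    have q3 : x.2.2.1^2 ≤ R^2 := sq_le_sq' e3.1 e3.2
    have q4 : x.2.2.2^2 ≤ R^2 := sq_le_sq' e4.1 e4.2
    nlinarith only [q3, q4, hqt0, mul_le_mul_of_nonneg_left hqtrt (by positivity : (0:ℝ) ≤ 2*R^2)]
  have hBest : |SB - rt - x.2.2.2| ≤ Cr/qt := by
    rw [abs_le]
    constructor
    · have h1 : 0 ≤ Cr/qt := by positivity
      linarith
    · have h2 : 0 ≤ 3*R/qt := by positivity
      rw [hCrsplit]; linarith
  -- combine
  have hphi : phiN N4 (zseq n) x = max (SA + |x.2.2.1| - V) ((nn + x.1) + SB - V) := by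
    unfold phiN
    rw [hNzx, hNz, max_sub_sub_right]
  rw [Real.dist_eq, g4_eq, hphi]
  have key := abs_max_sub_max_le_max (x.1 + |x.2.2.1|) (x.1 + x.2.2.2)
    (SA + |x.2.2.1| - V) ((nn + x.1) + SB - V)
  have k1 : |x.1 + |x.2.2.1| - (SA + |x.2.2.1| - V)| ≤ Cr/qt := by
    rw [show x.1 + |x.2.2.1| - (SA + |x.2.2.1| - V) = -(SA - V - x.1) by ring, abs_neg]
    exact hAest
  have k2 : |x.1 + x.2.2.2 - ((nn + x.1) + SB - V)| ≤ Cr/qt := by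
    have e : x.1 + x.2.2.2 - ((nn + x.1) + SB - V) = -(SB - rt - x.2.2.2) := by
      rw [hVdef]; ring
    rw [e, abs_neg]
    exact hBest
  have hfinal := key.trans (max_le k1 k2)
  have hqtbig : Cr/ε + 1 ≤ qt := by
    have hc0 : (0:ℝ) ≤ Cr/ε + 1 := by positivity
    have h1 : (Cr/ε + 1)^2 ≤ rt := by
      rw [hrtdef]
      rw [Real.le_sqrt (by positivity) hnn0]
      calc ((Cr/ε + 1)^2)^2 = (Cr/ε + 1)^4 := by ring
        _ ≤ nn := hnnB
    rw [hqtdef]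
    rw [Real.le_sqrt hc0 hrt0]
    exact h1
  have hlt : Cr/qt < ε := by
    rw [div_lt_iff₀ hqtp]
    have h1 : ε*(Cr/ε + 1) = Cr + ε := by field_simp
    have h3 := mul_le_mul_of_nonneg_left hqtbig hε.le
    linarith only [h1, hε, h3]
  linarith

set_option maxHeartbeats 2000000 in
/-- For the norm `max(√(x² + y²) + |w|, |x| + √(w² + z²))` on `ℝ⁴`, the function
`g(x,y,w,z) = max(x − w, x + w, x + z)` is a horofunction but not a Busemann
point. -/
theorem example4_horofunction_not_busemann :
    IsHorofunctionN N4 g4 ∧ ¬ IsBusemannPointN N4 g4 := by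
  constructor
  · -- horofunction
    constructor
    · exact ⟨zseq, zseq_conv⟩
    · -- not of the form φ_z
      intro z hz
      set s : ℝ := N4 z + 1 with hsdef
      have hz0 : 0 ≤ N4 z := N4_nonneg z
      have hs0 : 0 ≤ s := by linarith
      set x : ℝ × ℝ × ℝ × ℝ := (-s, 0, 0, 0) with hxdef
      have hx1 : x.1 = -s := rfl
      have hx2 : x.2.1 = 0 := rfl
      have hx3 : x.2.2.1 = 0 := rfl
      have hx4 : x.2.2.2 = 0 := rfl
      have hN4x : N4 x = s := by
        unfold N4
        simp only [hx1, hx2, hx3, hx4]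
        rw [show (-s)^2 + (0:ℝ)^2 = s^2 by ring, Real.sqrt_sq hs0]
        simp [abs_of_nonneg hs0]
      have hg4x : g4 x = -s := by
        unfold g4
        simp only [hx1, hx3, hx4]
        simp
      have htri : N4 x ≤ N4 (z - x) + N4 z := by
        have h1 : N4 x = N4 ((x - z) + z) := by rw [sub_add_cancel]
        have h2 := N4_triangle (x - z) z
        have h3 : N4 (x - z) = N4 (z - x) := by rw [← N4_neg (x - z), neg_sub]
        rw [h1]
        rw [h3] at h2
        exact h2
      have hphix : phiN N4 z x = N4 (z - x) - N4 z := rfl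
      have : g4 x = phiN N4 z x := by rw [hz]
      rw [hg4x, hphix] at this
      rw [hN4x] at htri
      -- -s = N4 (z-x) - N4 z ≥ (s - N4 z) - N4 z = -s + 2 : contradiction
      have : -s ≥ s - 2 * N4 z := by linarith
      simp only [hsdef] at this
      linarith
  · -- not a Busemann point
    rintro ⟨-, T, γ, ⟨hTi, hT0, hTub, hag⟩, hconv⟩
    obtain ⟨M, hM⟩ := hag 1 one_pos
    set n0 : ℝ := N4 (γ 0) with hn0def
    have hn0 : 0 ≤ n0 := N4_nonneg _
    set a0 : ℝ := (γ 0).1 with ha0def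
    set d0 : ℝ := (γ 0).2.2.2 with hd0def
    set C0 : ℝ := 4 + n0 with hC0def
    set C1 : ℝ := 1 + C0 + |a0| + |d0| with hC1def
    set R : ℝ := C1 + C0 + n0 + 3 with hRdef
    have hC00 : 0 ≤ C0 := by linarith
    have hC10 : 0 ≤ C1 := by positivity
    have hR0 : 0 ≤ R := by positivity
    set x0 : ℝ × ℝ × ℝ × ℝ := (0, 0, 0, -R) with hx0def
    obtain ⟨M3, hM3⟩ := hconv {x0} isCompact_singleton 1 one_pos
    obtain ⟨s, hsT, hs⟩ := not_bddAbove_iff.mp hTub (max (max M M3) (C0 + |a0| + 1))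
    have hsM : M ≤ s := le_of_lt (lt_of_le_of_lt (le_trans (le_max_left _ _) (le_max_left _ _)) hs)
    have hsM3 : M3 ≤ s := le_of_lt (lt_of_le_of_lt (le_trans (le_max_right _ _) (le_max_left _ _)) hs)
    have hsbig : C0 + |a0| + 1 < s := lt_of_le_of_lt (le_max_right _ _) hs
    -- step A : |g4 (γ s) + s| ≤ C0
    obtain ⟨M2, hM2⟩ := hconv {γ s} isCompact_singleton 1 one_pos
    obtain ⟨t, htT, hts⟩ := not_bddAbove_iff.mp hTub (max (max M M2) s)
    have htM : M ≤ t := le_of_lt (lt_of_le_of_lt (le_trans (le_max_left _ _) (le_max_left _ _)) hts)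
    have htM2 : M2 ≤ t := le_of_lt (lt_of_le_of_lt (le_trans (le_max_right _ _) (le_max_left _ _)) hts)
    have hst : s ≤ t := le_of_lt (lt_of_le_of_lt (le_max_right _ _) hts)
    have e2 : |N4 (γ s - γ s) + N4 (γ s - γ 0) - s| < 1 := hM s hsT s hsT hsM le_rfl
    rw [sub_self, N4_zero, zero_add] at e2
    have e3 : |N4 (γ t - γ t) + N4 (γ t - γ 0) - t| < 1 := hM t htT t htT htM le_rfl
    rw [sub_self, N4_zero, zero_add] at e3
    have e1 : |N4 (γ t - γ s) + N4 (γ s - γ 0) - t| < 1 := hM s hsT t htT hsM hst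
    have e4 : |phiN N4 (γ t) (γ s) - g4 (γ s)| < 1 :=
      hM2 t htT htM2 (γ s) (Set.mem_singleton _)
    have hphi4 : phiN N4 (γ t) (γ s) = N4 (γ t - γ s) - N4 (γ t) := rfl
    rw [hphi4] at e4
    have tri1 : N4 (γ t - γ 0) ≤ N4 (γ t) + n0 := N4_sub_le _ _
    have tri2 : N4 (γ t) ≤ N4 (γ t - γ 0) + n0 := by
      have h1 : N4 (γ t) = N4 ((γ t - γ 0) + γ 0) := by rw [sub_add_cancel]
      rw [h1]
      exact N4_triangle _ _
    rw [abs_lt] at e1 e2 e3 e4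
    have stepA : |g4 (γ s) + s| ≤ C0 := by
      rw [abs_le]
      constructor
      · rw [hC0def]; linarith [e1.1, e1.2, e2.1, e2.2, e3.1, e3.2, e4.1, e4.2]
      · rw [hC0def]; linarith [e1.1, e1.2, e2.1, e2.2, e3.1, e3.2, e4.1, e4.2]
    rw [abs_le] at stepA
    -- step B : coordinate bounds at s
    have ha_le : (γ s).1 ≤ -s + C0 := by
      have := g4_ge_fst (γ s)
      linarith [stepA.2]
    have hNs0 : N4 (γ s - γ 0) ≤ s + 1 := by linarith [e2.2]
    have hb2 := N4_lower2 (γ s - γ 0)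
    have hfst : (γ s - γ 0).1 = (γ s).1 - a0 := by simp only [Prod.fst_sub, ha0def]
    have hthd : (γ s - γ 0).2.2.2 = (γ s).2.2.2 - d0 := by
      simp only [Prod.snd_sub, hd0def]
    rw [hfst, hthd] at hb2
    have habs1 : a0 - (γ s).1 ≤ |(γ s).1 - a0| := by
      rw [abs_sub_comm]
      exact le_abs_self _
    have hsqrtle : Real.sqrt ((γ s - γ 0).2.2.1^2 + ((γ s).2.2.2 - d0)^2) ≤ 1 + C0 + |a0| := by
      have h1 : |a0| ≥ -a0 := neg_le_abs _
      nlinarith [hb2, hNs0, habs1, ha_le]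
    have hdlow : -C1 ≤ (γ s).2.2.2 := by
      have h2 : |(γ s).2.2.2 - d0| ≤ Real.sqrt ((γ s - γ 0).2.2.1^2 + ((γ s).2.2.2 - d0)^2) :=
        abs_le_sqrt2 _ _
      have h3 := abs_le.mp (h2.trans hsqrtle)
      have h4 : -|d0| ≤ d0 := neg_abs_le _
      rw [hC1def]
      linarith [h3.1]
    have hafst : s - C0 ≤ |(γ s).1| := by
      have h1 : -(γ s).1 ≤ |(γ s).1| := neg_le_abs _
      linarith
    have hNgs : N4 (γ s) ≤ s + 1 + n0 := by
      have h1 : N4 (γ s) = N4 ((γ s - γ 0) + γ 0) := by rw [sub_add_cancel]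
      rw [h1]
      have := N4_triangle (γ s - γ 0) (γ 0)
      linarith
    -- step C : contradiction
    have e5 : |phiN N4 (γ s) x0 - g4 x0| < 1 := hM3 s hsT hsM3 x0 (Set.mem_singleton _)
    have hg4x0 : g4 x0 = 0 := by
      unfold g4
      simp only [show x0.1 = 0 from rfl, show x0.2.2.1 = 0 from rfl, show x0.2.2.2 = -R from rfl]
      rw [sub_zero, add_zero, zero_add, max_eq_left (by linarith : -R ≤ 0), max_self]
    have hlow : N4 (γ s - x0) ≥ |(γ s).1| + ((γ s).2.2.2 + R) := by
      have h1 := N4_lower2 (γ s - x0)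
      have h2 : (γ s - x0).1 = (γ s).1 := by
        simp only [Prod.fst_sub, show x0.1 = 0 from rfl, sub_zero]
      have h3 : (γ s - x0).2.2.2 = (γ s).2.2.2 + R := by
        simp only [Prod.snd_sub, show x0.2.2.2 = -R from rfl, sub_neg_eq_add]
      rw [h2, h3] at h1
      have h4 : (γ s).2.2.2 + R ≤ Real.sqrt ((γ s - x0).2.2.1^2 + ((γ s).2.2.2 + R)^2) := by
        exact le_trans (le_abs_self _) (abs_le_sqrt2 _ _)
      calc |(γ s).1| + ((γ s).2.2.2 + R)
          ≤ |(γ s).1| + Real.sqrt ((γ s - x0).2.2.1^2 + ((γ s).2.2.2 + R)^2) := by linarith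
        _ ≤ N4 (γ s - x0) := h1
    have hphi5 : phiN N4 (γ s) x0 = N4 (γ s - x0) - N4 (γ s) := rfl
    rw [hphi5, hg4x0, sub_zero, abs_lt] at e5
    -- N4 (γ s - x0) - N4 (γ s) ≥ (s - C0) + (-C1 + R) - (s + 1 + n0) = R - C0 - C1 - n0 - 1 = 2
    have h6 : (2:ℝ) ≤ N4 (γ s - x0) - N4 (γ s) := by
      have h7 : s - C0 + (-C1 + R) ≤ |(γ s).1| + ((γ s).2.2.2 + R) := by linarith
      have h8 : R = C1 + C0 + n0 + 3 := hRdef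
      linarith [hlow, hNgs]
    linarith [e5.2]
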